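/- arXiv:2102.04576 — 3 statements merged into one kernel-verified Lean document; each statement's English description precedes it below -/
import Mathlib

section
/- Under the Mallows measure p_q on S_n with q > 0, the probability that a fixed set of positions {s, s+1, …, s+k-1} ⊆ {1,…,n-1} all are descents (i.e., ω(s) > ω(s+1) > ⋯ > ω(s+k)) equals q^{C(k+1,2)}/[k+1]_q!. -/
/-- Number of inversions of a permutation of `Fin n`. -/
def inversions (n : ℕ) (ω : Equiv.Perm (Fin n)) : ℕ :=
  ((Finset.univ : Finset (Fin n × Fin n)).filter
    (fun p => p.1 < p.2 ∧ ω p.2 < ω p.1)).card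

/-- The q-factorial `[n]_q! = ∏_{i=1}^{n-1} (1 + q + ⋯ + q^i)`. -/
noncomputable def qFactorial (q : ℝ) (n : ℕ) : ℝ :=
  ∏ i ∈ Finset.range n, ∑ j ∈ Finset.range (i + 1), q ^ j

/-- The Mallows measure on `S_n`. -/
noncomputable def mallows (q : ℝ) (n : ℕ) (ω : Equiv.Perm (Fin n)) : ℝ :=
  q ^ inversions n ω / qFactorial q n

open Finset Equiv

theorem Equiv.Perm.inv_apply_self {α : Type*} (f : Perm α) (x : α) : f⁻¹ (f x) = x :=
  f.symm_apply_apply x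

theorem Equiv.Perm.apply_inv_self {α : Type*} (f : Perm α) (x : α) : f (f⁻¹ x) = x :=
  f.apply_symm_apply x

namespace MallowsAux

instance decStrictMono {a b : ℕ} (f : Fin a → Fin b) : Decidable (StrictMono f) :=
  decidable_of_iff (∀ i j : Fin a, i < j → f i < f j) Iff.rfl

instance decStrictAnti {a b : ℕ} (f : Fin a → Fin b) : Decidable (StrictAnti f) :=
  decidable_of_iff (∀ i j : Fin a, i < j → f j < f i) Iff.rfl

variable {n l k : ℕ}

def emb (hl : l + (k+1) ≤ n) (m : Fin (k+1)) : Fin n := ⟨l + m.1, by omega⟩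

lemma emb_lt_emb (hl : l + (k+1) ≤ n) {a b : Fin (k+1)} (h : a < b) :
    emb hl a < emb hl b := by
  simp only [emb, Fin.lt_def] at h ⊢; omega

lemma emb_val (hl : l + (k+1) ≤ n) (m : Fin (k+1)) : (emb hl m).1 = l + m.1 := rfl

lemma emb_inj (hl : l + (k+1) ≤ n) : Function.Injective (emb hl) := by
  intro a b h
  simp only [emb, Fin.ext_iff] at h ⊢; omega

def inB (l k : ℕ) (i : Fin n) : Prop := l ≤ i.1 ∧ i.1 < l + (k+1)

instance (l k : ℕ) (i : Fin n) : Decidable (inB l k i) := instDecidableAnd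

lemma emb_inB (hl : l + (k+1) ≤ n) (m : Fin (k+1)) : inB l k (emb hl m) := by
  constructor <;> simp [emb] <;> omega

lemma inB_eq_emb (hl : l + (k+1) ≤ n) {i : Fin n} (h : inB l k i) :
    i = emb hl ⟨i.1 - l, by obtain ⟨h1, h2⟩ := h; omega⟩ := by
  obtain ⟨h1, h2⟩ := h
  simp only [emb, Fin.ext_iff]; omega

def bfun (hl : l + (k+1) ≤ n) (σ : Perm (Fin (k+1))) (i : Fin n) : Fin n :=
  if h : inB l k i then emb hl (σ ⟨i.1 - l, by obtain ⟨h1, h2⟩ := h; omega⟩) else i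

lemma bfun_emb (hl : l + (k+1) ≤ n) (σ : Perm (Fin (k+1))) (m : Fin (k+1)) :
    bfun hl σ (emb hl m) = emb hl (σ m) := by
  rw [bfun, dif_pos (emb_inB hl m)]
  congr 2
  simp [emb, Fin.ext_iff]

lemma bfun_not_inB (hl : l + (k+1) ≤ n) (σ : Perm (Fin (k+1))) {i : Fin n}
    (h : ¬ inB l k i) : bfun hl σ i = i := dif_neg h

lemma bfun_inB (hl : l + (k+1) ≤ n) (σ : Perm (Fin (k+1))) {i : Fin n}
    (h : inB l k i) : inB l k (bfun hl σ i) := by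
  rw [bfun, dif_pos h]; exact emb_inB _ _

def bperm (hl : l + (k+1) ≤ n) (σ : Perm (Fin (k+1))) : Perm (Fin n) where
  toFun := bfun hl σ
  invFun := bfun hl σ⁻¹
  left_inv := by
    intro i
    by_cases h : inB l k i
    · rw [inB_eq_emb hl h, bfun_emb, bfun_emb, Perm.inv_apply_self]
    · rw [bfun_not_inB hl _ h, bfun_not_inB hl _ h]
  right_inv := by
    intro i
    by_cases h : inB l k i
    · rw [inB_eq_emb hl h, bfun_emb, bfun_emb, Perm.apply_inv_self]
    · rw [bfun_not_inB hl _ h, bfun_not_inB hl _ h]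

lemma bperm_apply (hl : l + (k+1) ≤ n) (σ : Perm (Fin (k+1))) (i : Fin n) :
    bperm hl σ i = bfun hl σ i := rfl

lemma bperm_inv_apply (hl : l + (k+1) ≤ n) (σ : Perm (Fin (k+1))) (i : Fin n) :
    (bperm hl σ)⁻¹ i = bfun hl σ⁻¹ i := rfl

lemma bperm_emb (hl : l + (k+1) ≤ n) (σ : Perm (Fin (k+1))) (m : Fin (k+1)) :
    bperm hl σ (emb hl m) = emb hl (σ m) := bfun_emb hl σ m

lemma inB_bperm_iff (hl : l + (k+1) ≤ n) (σ : Perm (Fin (k+1))) {i : Fin n} :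
    inB l k (bperm hl σ i) ↔ inB l k i := by
  constructor
  · intro h
    by_contra hc
    rw [bperm_apply, bfun_not_inB hl _ hc] at h
    exact hc h
  · exact bfun_inB hl σ

lemma lt_of_not_both (c : Fin n → Fin n) (hfix : ∀ i, ¬ inB l k i → c i = i)
    (hmem : ∀ i, inB l k i → inB l k (c i)) {i j : Fin n} (hij : i < j)
    (hQ : ¬ (inB l k i ∧ inB l k j)) : c i < c j := by
  by_cases hi : inB l k i <;> by_cases hj : inB l k j
  · exact absurd ⟨hi, hj⟩ hQ
  · have h1 := hmem i hi
    have h2 := hfix j hj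
    have : ¬ (l ≤ j.1 ∧ j.1 < l + (k+1)) := hj
    rw [Fin.lt_def] at hij ⊢
    obtain ⟨ha, hb⟩ := h1
    obtain ⟨hc, hd⟩ := hi
    rw [h2]
    omega
  · have h1 := hmem j hj
    have h2 := hfix i hi
    have : ¬ (l ≤ i.1 ∧ i.1 < l + (k+1)) := hi
    rw [Fin.lt_def] at hij ⊢
    obtain ⟨ha, hb⟩ := h1
    obtain ⟨hc, hd⟩ := hj
    rw [h2]
    omega
  · rw [hfix i hi, hfix j hj]; exact hij

end MallowsAux

namespace MallowsAux
variable {n l k : ℕ}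

attribute [irreducible] bperm bfun emb

lemma inversions_mul (hl : l + (k+1) ≤ n) {τ : Perm (Fin n)}
    (hτ : StrictMono (fun m => τ (emb hl m))) (σ : Perm (Fin (k+1))) :
    inversions n (τ * bperm hl σ) = inversions n τ + inversions (k+1) σ := by
  classical
  have hsplit := Finset.card_filter_add_card_filter_not
    (s := (univ : Finset (Fin n × Fin n)).filter
      (fun p => p.1 < p.2 ∧ (τ * bperm hl σ) p.2 < (τ * bperm hl σ) p.1))
    (p := fun p => inB l k p.1 ∧ inB l k p.2)
  have h1 : (((univ : Finset (Fin n × Fin n)).filter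
      (fun p => p.1 < p.2 ∧ (τ * bperm hl σ) p.2 < (τ * bperm hl σ) p.1)).filter
      (fun p => inB l k p.1 ∧ inB l k p.2)).card = inversions (k+1) σ := by
    rw [inversions]
    refine (Finset.card_bij (fun a _ => (emb hl a.1, emb hl a.2)) ?_ ?_ ?_).symm
    · intro a ha
      simp only [mem_filter, mem_univ, true_and] at ha
      obtain ⟨hab, hσ⟩ := ha
      simp only [mem_filter, mem_univ, true_and]
      simp only [Perm.mul_apply, bperm_emb]
      exact ⟨⟨emb_lt_emb hl hab, hτ hσ⟩, emb_inB hl _, emb_inB hl _⟩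
    · intro a _ b _ h
      rw [Prod.ext_iff] at h ⊢
      exact ⟨emb_inj hl h.1, emb_inj hl h.2⟩
    · intro p hp
      simp only [mem_filter, mem_univ, true_and] at hp
      simp only [Perm.mul_apply] at hp
      obtain ⟨⟨hlt, hωlt⟩, hi, hj⟩ := hp
      obtain ⟨hi1, hi2⟩ := hi
      obtain ⟨hj1, hj2⟩ := hj
      have e1 : p.1 = emb hl ⟨p.1.1 - l, by omega⟩ := inB_eq_emb hl ⟨hi1, hi2⟩
      have e2 : p.2 = emb hl ⟨p.2.1 - l, by omega⟩ := inB_eq_emb hl ⟨hj1, hj2⟩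
      refine ⟨(⟨p.1.1 - l, by omega⟩, ⟨p.2.1 - l, by omega⟩), ?_, ?_⟩
      · simp only [mem_filter, mem_univ, true_and]
        constructor
        · rw [Fin.lt_def] at hlt ⊢
          simpa using by omega
        · rw [e1, e2] at hωlt
          simp only [bperm_emb] at hωlt
          exact hτ.lt_iff_lt.mp hωlt
      · rw [Prod.ext_iff]
        exact ⟨e1.symm, e2.symm⟩
  have h2 : (((univ : Finset (Fin n × Fin n)).filter
      (fun p => p.1 < p.2 ∧ (τ * bperm hl σ) p.2 < (τ * bperm hl σ) p.1)).filter
      (fun p => ¬ (inB l k p.1 ∧ inB l k p.2))).card = inversions n τ := by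
    rw [inversions]
    refine Finset.card_bij (fun p _ => (bperm hl σ p.1, bperm hl σ p.2)) ?_ ?_ ?_
    · intro p hp
      simp only [mem_filter, mem_univ, true_and] at hp
      simp only [Perm.mul_apply] at hp
      obtain ⟨⟨hlt, hωlt⟩, hQ⟩ := hp
      simp only [mem_filter, mem_univ, true_and]
      refine ⟨?_, hωlt⟩
      refine lt_of_not_both (⇑(bperm hl σ)) ?_ ?_ hlt hQ
      · intro i hi; rw [bperm_apply]; exact bfun_not_inB hl _ hi
      · intro i hi; rw [bperm_apply]; exact bfun_inB hl σ hi
    · intro a _ b _ h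
      rw [Prod.ext_iff] at h ⊢
      exact ⟨(bperm hl σ).injective h.1, (bperm hl σ).injective h.2⟩
    · intro p hp
      simp only [mem_filter, mem_univ, true_and] at hp
      obtain ⟨hlt, hτlt⟩ := hp
      have hQ : ¬ (inB l k p.1 ∧ inB l k p.2) := by
        rintro ⟨hi, hj⟩
        have e1 := inB_eq_emb hl hi
        have e2 := inB_eq_emb hl hj
        have hab : (⟨p.1.1 - l, by obtain ⟨a,b⟩ := hi; omega⟩ : Fin (k+1))
            < ⟨p.2.1 - l, by obtain ⟨a,b⟩ := hj; omega⟩ := by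
          rw [Fin.lt_def] at hlt ⊢
          obtain ⟨a, b⟩ := hi; obtain ⟨c, d⟩ := hj
          simpa using by omega
        have h3 : τ p.1 < τ p.2 := by rw [e1, e2]; exact hτ hab
        exact absurd hτlt (lt_asymm h3)
      have hinv1 : ∀ x : Fin n, inB l k ((bperm hl σ)⁻¹ x) ↔ inB l k x := by
        intro x
        conv_rhs => rw [← (bperm hl σ).apply_inv_self x]
        exact (inB_bperm_iff hl σ).symm
      refine ⟨((bperm hl σ)⁻¹ p.1, (bperm hl σ)⁻¹ p.2), ?_, ?_⟩
      · simp only [mem_filter, mem_univ, true_and]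
        simp only [Perm.mul_apply,
          Perm.apply_inv_self, hinv1]
        refine ⟨⟨?_, hτlt⟩, hQ⟩
        refine lt_of_not_both (⇑(bperm hl σ)⁻¹) ?_ ?_ hlt hQ
        · intro i hi; rw [bperm_inv_apply]; exact bfun_not_inB hl _ hi
        · intro i hi; rw [bperm_inv_apply]; exact bfun_inB hl σ⁻¹ hi
      · rw [Prod.ext_iff]
        exact ⟨(bperm hl σ).apply_inv_self p.1, (bperm hl σ).apply_inv_self p.2⟩
  have hSω : inversions n (τ * bperm hl σ)
      = ((univ : Finset (Fin n × Fin n)).filter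
      (fun p => p.1 < p.2 ∧ (τ * bperm hl σ) p.2 < (τ * bperm hl σ) p.1)).card := by
    rw [inversions]
  rw [hSω, ← hsplit, h1, h2, add_comm]

end MallowsAux

namespace MallowsAux
variable {n l k : ℕ}

lemma sum_factor (q : ℝ) (hl : l + (k+1) ≤ n) :
    ∑ ω : Perm (Fin n), q ^ inversions n ω
      = (∑ τ ∈ univ.filter (fun τ : Perm (Fin n) =>
            StrictMono (fun m => τ (emb hl m))), q ^ inversions n τ)
        * ∑ σ : Perm (Fin (k+1)), q ^ inversions (k+1) σ := by
  rw [Finset.sum_mul_sum]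
  rw [← Finset.sum_product']
  refine (Finset.sum_bij (fun a _ => a.1 * bperm hl a.2) ?_ ?_ ?_ ?_).symm
  · intro a _; exact mem_univ _
  · intro a ha b hb h
    simp only [mem_product, mem_filter, mem_univ, true_and] at ha hb
    have hinj : Function.Injective (fun m => a.1 (emb hl (a.2 m))) := by
      intro x y hxy
      exact a.2.injective (emb_inj hl (a.1.injective hxy))
    have hF : ∀ m, a.1 (emb hl (a.2 m)) = b.1 (emb hl (b.2 m)) := by
      intro m
      have := congrArg (fun ρ : Perm (Fin n) => ρ (emb hl m)) h
      simpa only [Perm.mul_apply, bperm_emb] using this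
    -- both a.2⁻¹ and b.2⁻¹ are sorting permutations for F := fun m => a.1 (emb hl (a.2 m))
    set F : Fin (k+1) → Fin n := fun m => a.1 (emb hl (a.2 m)) with hFdef
    have hmono1 : Monotone (F ∘ ⇑a.2⁻¹) := by
      have : (F ∘ ⇑a.2⁻¹) = fun m => a.1 (emb hl m) := by
        funext m; simp [hFdef]
      rw [this]; exact ha.1.monotone
    have hmono2 : Monotone (F ∘ ⇑b.2⁻¹) := by
      have : (F ∘ ⇑b.2⁻¹) = fun m => b.1 (emb hl m) := by
        funext m; simp [hFdef, hF]
      rw [this]; exact hb.1.monotone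
    have hs1 : F ∘ ⇑a.2⁻¹ = F ∘ ⇑(Tuple.sort F) :=
      Tuple.comp_sort_eq_comp_iff_monotone.mpr hmono1
    have hs2 : F ∘ ⇑b.2⁻¹ = F ∘ ⇑(Tuple.sort F) :=
      Tuple.comp_sort_eq_comp_iff_monotone.mpr hmono2
    have hFinj : Function.Injective F := fun x y hxy =>
      a.2.injective (emb_inj hl (a.1.injective hxy))
    have h22 : a.2 = b.2 := by
      have : ⇑a.2⁻¹ = ⇑b.2⁻¹ := by
        funext m
        exact hFinj (by rw [← Function.comp_apply (f := F), hs1, ← hs2]; rfl)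
      have h' : a.2⁻¹ = b.2⁻¹ := Equiv.ext (fun m => congrFun this m)
      exact inv_injective h'
    have h11 : a.1 = b.1 := by
      have hmm : a.1 * bperm hl a.2 = b.1 * bperm hl b.2 := h
      rw [h22] at hmm
      exact mul_right_cancel hmm
    exact Prod.ext h11 h22
  · intro ω _
    set F : Fin (k+1) → Fin n := fun m => ω (emb hl m) with hFdef
    set σ : Perm (Fin (k+1)) := (Tuple.sort F)⁻¹ with hσdef
    refine ⟨(ω * (bperm hl σ)⁻¹, σ), ?_, ?_⟩
    · simp only [mem_product, mem_filter, mem_univ, true_and, and_true]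
      have happ : ∀ m, (ω * (bperm hl σ)⁻¹) (emb hl m) = F (Tuple.sort F m) := by
        intro m
        have : (bperm hl σ)⁻¹ (emb hl m) = emb hl (σ⁻¹ m) := by
          rw [bperm_inv_apply, bfun_emb]
        rw [Perm.mul_apply, this, hσdef]
        simp [hFdef]
      have : (fun m => (ω * (bperm hl σ)⁻¹) (emb hl m)) = F ∘ ⇑(Tuple.sort F) := by
        funext m; exact happ m
      rw [this]
      refine Monotone.strictMono_of_injective (Tuple.monotone_sort F) ?_
      intro x y hxy
      exact (Tuple.sort F).injective (emb_inj hl (ω.injective hxy))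
    · show ω * (bperm hl σ)⁻¹ * bperm hl σ = ω
      rw [inv_mul_cancel_right]
  · intro a ha
    simp only [mem_product, mem_filter, mem_univ, true_and] at ha
    show q ^ inversions n a.1 * q ^ inversions (k+1) a.2
        = q ^ inversions n (a.1 * bperm hl a.2)
    rw [inversions_mul hl ha.1 a.2, pow_add]

lemma sum_desc (q : ℝ) (hl : l + (k+1) ≤ n) :
    ∑ ω ∈ univ.filter (fun ω : Perm (Fin n) =>
        StrictAnti (fun m => ω (emb hl m))), q ^ inversions n ω
      = (∑ τ ∈ univ.filter (fun τ : Perm (Fin n) =>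
            StrictMono (fun m => τ (emb hl m))), q ^ inversions n τ)
        * q ^ inversions (k+1) (Fin.revPerm : Perm (Fin (k+1))) := by
  rw [Finset.sum_mul]
  refine (Finset.sum_bij (fun τ _ => τ * bperm hl Fin.revPerm) ?_ ?_ ?_ ?_).symm
  · intro τ hτ
    simp only [mem_filter, mem_univ, true_and] at hτ ⊢
    have : (fun m => (τ * bperm hl Fin.revPerm) (emb hl m))
        = (fun m => τ (emb hl m)) ∘ (fun m : Fin (k+1) => Fin.revPerm m) := by
      funext m; rw [Perm.mul_apply, bperm_emb]; rfl
    rw [this]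
    exact hτ.comp_strictAnti (fun x y hxy => by
      simpa [Fin.revPerm_apply, Fin.rev_lt_rev] using hxy)
  · intro a _ b _ h
    exact mul_right_cancel h
  · intro ω hω
    simp only [mem_filter, mem_univ, true_and] at hω
    refine ⟨ω * (bperm hl Fin.revPerm)⁻¹, ?_, by
      show ω * (bperm hl Fin.revPerm)⁻¹ * bperm hl Fin.revPerm = ω
      rw [inv_mul_cancel_right]⟩
    simp only [mem_filter, mem_univ, true_and]
    have happ : ∀ m, (ω * (bperm hl Fin.revPerm)⁻¹) (emb hl m)
        = ω (emb hl (Fin.revPerm⁻¹ m)) := by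
      intro m
      rw [Perm.mul_apply, bperm_inv_apply, bfun_emb]
    have : (fun m => (ω * (bperm hl Fin.revPerm)⁻¹) (emb hl m))
        = (fun m => ω (emb hl m)) ∘ (fun m : Fin (k+1) => Fin.revPerm⁻¹ m) := by
      funext m; exact happ m
    rw [this]
    exact StrictAnti.comp hω (fun x y hxy => by
      rw [show (Fin.revPerm : Perm (Fin (k+1)))⁻¹ = Fin.revPerm from rfl]
      simpa [Fin.rev_lt_rev] using hxy)
  · intro τ hτ
    simp only [mem_filter, mem_univ, true_and] at hτ
    show q ^ inversions n τ * q ^ inversions (k+1) (Fin.revPerm : Perm (Fin (k+1)))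
        = q ^ inversions n (τ * bperm hl Fin.revPerm)
    rw [inversions_mul hl hτ, pow_add]

end MallowsAux

namespace MallowsAux
variable {n l k : ℕ}

lemma card_lt_pairs (m : ℕ) :
    ((univ : Finset (Fin m × Fin m)).filter (fun p => p.1 < p.2)).card = m.choose 2 := by
  rw [Finset.card_eq_sum_card_fiberwise (f := fun p : Fin m × Fin m => p.2)
    (t := univ) (fun x _ => mem_univ _)]
  have hfib : ∀ b : Fin m,
      (((univ : Finset (Fin m × Fin m)).filter (fun p => p.1 < p.2)).filter
        (fun p => p.2 = b)).card = b.1 := by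
    intro b
    rw [← Fin.card_Iio (b := b)]
    refine Finset.card_bij (fun p _ => p.1) ?_ ?_ ?_
    · intro p hp
      simp only [mem_filter, mem_univ, true_and] at hp
      have h5 := hp.1
      rw [hp.2] at h5
      exact mem_Iio.mpr h5
    · intro x hx y hy hxy
      simp only [mem_filter, mem_univ, true_and] at hx hy
      exact Prod.ext hxy (hx.2.trans hy.2.symm)
    · intro a ha
      rw [mem_Iio] at ha
      exact ⟨(a, b), by simp [ha], rfl⟩
  rw [Finset.sum_congr rfl (fun b _ => hfib b)]
  have h4 : ∑ b : Fin m, b.1 = ∑ i ∈ Finset.range m, i :=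
    Fin.sum_univ_eq_sum_range (fun i => i) m
  rw [h4]
  have h2 := Finset.sum_range_id_mul_two m
  have h3 := Nat.choose_two_right m
  omega

lemma inversions_revPerm (m : ℕ) :
    inversions m (Fin.revPerm : Perm (Fin m)) = m.choose 2 := by
  rw [inversions]
  have : ∀ p : Fin m × Fin m,
      (p.1 < p.2 ∧ Fin.revPerm p.2 < Fin.revPerm p.1) ↔ (p.1 < p.2) := by
    intro p
    simp [Fin.rev_lt_rev, and_self_iff]
  rw [show ((univ : Finset (Fin m × Fin m)).filter
      (fun p => p.1 < p.2 ∧ Fin.revPerm p.2 < Fin.revPerm p.1))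
      = ((univ : Finset (Fin m × Fin m)).filter (fun p => p.1 < p.2)) from
    Finset.filter_congr (fun p _ => this p)]
  exact card_lt_pairs m

def insFun (p : Fin (n+1)) (e : Perm (Fin n)) : Fin (n+1) → Fin (n+1) :=
  Fin.cases p (fun i => p.succAbove (e i))

lemma insFun_zero (p : Fin (n+1)) (e : Perm (Fin n)) : insFun p e 0 = p := rfl

lemma insFun_succ (p : Fin (n+1)) (e : Perm (Fin n)) (i : Fin n) :
    insFun p e i.succ = p.succAbove (e i) := by
  rw [insFun, Fin.cases_succ]

lemma insFun_injective (p : Fin (n+1)) (e : Perm (Fin n)) :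
    Function.Injective (insFun p e) := by
  intro x y h
  rcases Fin.eq_zero_or_eq_succ x with rfl | ⟨i, rfl⟩ <;>
    rcases Fin.eq_zero_or_eq_succ y with rfl | ⟨j, rfl⟩
  · rfl
  · rw [insFun_zero, insFun_succ] at h
    exact absurd h.symm (Fin.succAbove_ne p (e j))
  · rw [insFun_zero, insFun_succ] at h
    exact absurd h (Fin.succAbove_ne p (e i))
  · rw [insFun_succ, insFun_succ] at h
    rw [e.injective (Fin.succAbove_right_injective h)]

noncomputable def ins (p : Fin (n+1)) (e : Perm (Fin n)) : Perm (Fin (n+1)) :=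
  Equiv.ofBijective _ (Finite.injective_iff_bijective.mp (insFun_injective p e))

lemma ins_apply (p : Fin (n+1)) (e : Perm (Fin n)) (x : Fin (n+1)) :
    ins p e x = insFun p e x := rfl

lemma ins_zero (p : Fin (n+1)) (e : Perm (Fin n)) : ins p e 0 = p := rfl

lemma ins_succ (p : Fin (n+1)) (e : Perm (Fin n)) (i : Fin n) :
    ins p e i.succ = p.succAbove (e i) := by
  rw [ins_apply, insFun_succ]

lemma inversions_ins (p : Fin (n+1)) (e : Perm (Fin n)) :
    inversions (n+1) (ins p e) = p.1 + inversions n e := by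
  rw [inversions]
  have hsplit := Finset.card_filter_add_card_filter_not
    (s := (univ : Finset (Fin (n+1) × Fin (n+1))).filter
      (fun x => x.1 < x.2 ∧ ins p e x.2 < ins p e x.1))
    (p := fun x => x.1 = 0)
  have h1 : (((univ : Finset (Fin (n+1) × Fin (n+1))).filter
      (fun x => x.1 < x.2 ∧ ins p e x.2 < ins p e x.1)).filter
      (fun x => x.1 = 0)).card = p.1 := by
    rw [← Fin.card_Iio (b := p)]
    refine Finset.card_bij (fun x _ => ins p e x.2) ?_ ?_ ?_
    · intro x hx
      simp only [mem_filter, mem_univ, true_and] at hx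
      obtain ⟨⟨_, hlt⟩, h0⟩ := hx
      rw [mem_Iio]
      rw [h0, ins_zero] at hlt
      exact hlt
    · intro x hx y hy hxy
      simp only [mem_filter, mem_univ, true_and] at hx hy
      exact Prod.ext (hx.2.trans hy.2.symm) ((ins p e).injective hxy)
    · intro y hy
      rw [mem_Iio] at hy
      refine ⟨(0, (ins p e).symm y), ?_, (ins p e).apply_symm_apply y⟩
      simp only [mem_filter, mem_univ, true_and]
      refine ⟨⟨?_, ?_⟩, by trivial⟩
      · rw [Fin.pos_iff_ne_zero]
        intro h0
        have hyp : y = p :=  by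
          rw [← (ins p e).apply_symm_apply y, h0, ins_zero]
        rw [hyp] at hy
        exact lt_irrefl _ hy
      · rw [(ins p e).apply_symm_apply, ins_zero]
        exact hy
  have h2 : (((univ : Finset (Fin (n+1) × Fin (n+1))).filter
      (fun x => x.1 < x.2 ∧ ins p e x.2 < ins p e x.1)).filter
      (fun x => ¬ x.1 = 0)).card = inversions n e := by
    rw [inversions]
    refine (Finset.card_bij (fun a _ => (a.1.succ, a.2.succ)) ?_ ?_ ?_).symm
    · intro a ha
      simp only [mem_filter, mem_univ, true_and] at ha
      simp only [mem_filter, mem_univ, true_and]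
      refine ⟨⟨?_, ?_⟩, Fin.succ_ne_zero a.1⟩
      · exact Fin.succ_lt_succ_iff.mpr ha.1
      · rw [ins_succ, ins_succ]
        exact (Fin.strictMono_succAbove p) ha.2
    · intro a _ b _ h
      rw [Prod.ext_iff] at h ⊢
      exact ⟨Fin.succ_injective n h.1, Fin.succ_injective n h.2⟩
    · intro x hx
      simp only [mem_filter, mem_univ, true_and] at hx
      obtain ⟨⟨hlt, hins⟩, h0⟩ := hx
      have hx2 : x.2 ≠ 0 := by
        intro h
        rw [h] at hlt
        exact Fin.not_lt_zero _ hlt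
      refine ⟨(x.1.pred h0, x.2.pred hx2), ?_, ?_⟩
      · simp only [mem_filter, mem_univ, true_and]
        constructor
        · rw [Fin.pred_lt_pred_iff]
          exact hlt
        · have e1 : x.1 = (x.1.pred h0).succ := (Fin.succ_pred x.1 h0).symm
          have e2 : x.2 = (x.2.pred hx2).succ := (Fin.succ_pred x.2 hx2).symm
          rw [e1, e2, ins_succ, ins_succ] at hins
          exact (Fin.strictMono_succAbove p).lt_iff_lt.mp hins
      · rw [Prod.ext_iff]
        exact ⟨Fin.succ_pred x.1 h0, Fin.succ_pred x.2 hx2⟩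
  omega

lemma sum_pow_inversions (q : ℝ) : ∀ m : ℕ,
    ∑ σ : Perm (Fin m), q ^ inversions m σ = qFactorial q m
  | 0 => by
    have h0 : ∀ σ : Perm (Fin 0), inversions 0 σ = 0 := by
      intro σ
      rw [inversions]
      simp
    simp only [h0, pow_zero, Finset.sum_const, Finset.card_univ, nsmul_eq_mul, mul_one]
    simp [qFactorial, Fintype.card_perm]
  | (m+1) => by
    have hbij : Function.Bijective
        (fun x : Fin (m+1) × Perm (Fin m) => ins x.1 x.2) := by
      rw [Fintype.bijective_iff_injective_and_card]
      constructor
      · intro a b h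
        have hp : a.1 = b.1 := by
          rw [← ins_zero a.1 a.2, ← ins_zero b.1 b.2]
          simp only at h
          rw [h]
        have he : a.2 = b.2 := by
          apply Equiv.ext
          intro i
          apply Fin.succAbove_right_injective (p := a.1)
          rw [← ins_succ a.1 a.2 i]
          conv_rhs => rw [hp, ← ins_succ b.1 b.2 i]
          simp only at h
          rw [h]
        exact Prod.ext hp he
      · simp [Fintype.card_perm, Nat.factorial_succ]
    calc ∑ σ : Perm (Fin (m+1)), q ^ inversions (m+1) σ
        = ∑ x : Fin (m+1) × Perm (Fin m), q ^ inversions (m+1) (ins x.1 x.2) :=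
          (Fintype.sum_bijective _ hbij _ _ (fun x => rfl)).symm
      _ = ∑ p : Fin (m+1), ∑ e : Perm (Fin m), q ^ p.1 * q ^ inversions m e := by
          rw [Fintype.sum_prod_type]
          exact Finset.sum_congr rfl fun p _ => Finset.sum_congr rfl fun e _ => by
            rw [inversions_ins, pow_add]
      _ = (∑ p : Fin (m+1), q ^ p.1) * ∑ e : Perm (Fin m), q ^ inversions m e := by
          rw [Finset.sum_mul_sum]
      _ = qFactorial q (m+1) := by
          rw [sum_pow_inversions q m]
          have h5 : ∑ p : Fin (m+1), q ^ p.1 = ∑ j ∈ Finset.range (m+1), q ^ j :=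
            Fin.sum_univ_eq_sum_range (fun j => q ^ j) (m+1)
          rw [h5]
          simp only [qFactorial]
          rw [Finset.prod_range_succ, mul_comm]

end MallowsAux

open MallowsAux in
/-- Under the Mallows measure, the probability that positions `s, s+1, …, s+k-1`
(1-indexed, a position `i` being a descent when `ω(i) > ω(i+1)`) are all descents
is `q^{C(k+1,2)} / [k+1]_q!`.  A pair `p` of consecutive indices of `Fin n`
represents the (1-indexed) position `p.1.val + 1`. -/
theorem mallows_consecutive_descents (q : ℝ) (hq : 0 < q) (n s k : ℕ)
    (hs : 1 ≤ s) (hsk : s + k ≤ n) :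
    ∑ ω ∈ (Finset.univ : Finset (Equiv.Perm (Fin n))).filter
        (fun ω => ∀ p : Fin n × Fin n, p.1.val + 1 = p.2.val →
          s ≤ p.1.val + 1 → p.1.val + 1 < s + k → ω p.2 < ω p.1),
      mallows q n ω = q ^ ((k + 1).choose 2) / qFactorial q (k + 1) := by
  obtain ⟨l, rfl⟩ : ∃ l, s = l + 1 := ⟨s - 1, by omega⟩
  have hl : l + (k+1) ≤ n := by omega
  have hfilt : (Finset.univ : Finset (Equiv.Perm (Fin n))).filter
      (fun ω => ∀ p : Fin n × Fin n, p.1.val + 1 = p.2.val →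
          l + 1 ≤ p.1.val + 1 → p.1.val + 1 < (l + 1) + k → ω p.2 < ω p.1)
      = Finset.univ.filter (fun ω : Equiv.Perm (Fin n) =>
          StrictAnti (fun m : Fin (k+1) => ω (emb hl m))) := by
    apply Finset.filter_congr
    intro ω _
    constructor
    · intro h
      rw [Fin.strictAnti_iff_succ_lt]
      intro i
      refine h (emb hl i.castSucc, emb hl i.succ) ?_ ?_ ?_
      · show (emb hl i.castSucc).1 + 1 = (emb hl i.succ).1
        rw [emb_val, emb_val, Fin.coe_castSucc, Fin.val_succ]
        omega
      · show l + 1 ≤ (emb hl i.castSucc).1 + 1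
        rw [emb_val]; omega
      · show (emb hl i.castSucc).1 + 1 < (l + 1) + k
        rw [emb_val, Fin.coe_castSucc]
        have := i.isLt
        omega
    · intro h p h12 hp1 hp2
      have ha : p.1.1 - l < k + 1 := by omega
      have hb : p.1.1 - l + 1 < k + 1 := by omega
      have e1 : p.1 = emb hl ⟨p.1.1 - l, ha⟩ := by
        refine Fin.ext ?_
        rw [emb_val]
        simp only []
        omega
      have e2 : p.2 = emb hl ⟨p.1.1 - l + 1, hb⟩ := by
        refine Fin.ext ?_
        rw [emb_val]
        simp only []
        omega
      have hab : (⟨p.1.1 - l, ha⟩ : Fin (k+1)) < ⟨p.1.1 - l + 1, hb⟩ := by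
        rw [Fin.mk_lt_mk]; omega
      have := h hab
      rw [e1, e2]
      exact this
  rw [hfilt]
  have hsumdesc := sum_desc q hl
  have hrev : inversions (k+1) (Fin.revPerm : Equiv.Perm (Fin (k+1)))
      = (k+1).choose 2 := inversions_revPerm (k+1)
  have hQn : qFactorial q n
      = (∑ τ ∈ Finset.univ.filter (fun τ : Equiv.Perm (Fin n) =>
          StrictMono (fun m : Fin (k+1) => τ (emb hl m))), q ^ inversions n τ)
        * qFactorial q (k+1) := by
    rw [← sum_pow_inversions q n, ← sum_pow_inversions q (k+1)]
    exact sum_factor q hl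
  have hA_pos : 0 < ∑ τ ∈ Finset.univ.filter (fun τ : Equiv.Perm (Fin n) =>
      StrictMono (fun m : Fin (k+1) => τ (emb hl m))), q ^ inversions n τ := by
    apply Finset.sum_pos
    · intro τ _; exact pow_pos hq _
    · refine ⟨1, ?_⟩
      simp only [Finset.mem_filter, Finset.mem_univ, true_and]
      intro x y hxy
      simpa using emb_lt_emb hl hxy
  calc ∑ ω ∈ Finset.univ.filter (fun ω : Equiv.Perm (Fin n) =>
          StrictAnti (fun m : Fin (k+1) => ω (emb hl m))), mallows q n ω
      = (∑ ω ∈ Finset.univ.filter (fun ω : Equiv.Perm (Fin n) =>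
          StrictAnti (fun m : Fin (k+1) => ω (emb hl m))),
            q ^ inversions n ω) / qFactorial q n := by
        simp only [mallows]
        rw [Finset.sum_div]
    _ = ((∑ τ ∈ Finset.univ.filter (fun τ : Equiv.Perm (Fin n) =>
          StrictMono (fun m : Fin (k+1) => τ (emb hl m))), q ^ inversions n τ)
            * q ^ ((k+1).choose 2))
        / ((∑ τ ∈ Finset.univ.filter (fun τ : Equiv.Perm (Fin n) =>
          StrictMono (fun m : Fin (k+1) => τ (emb hl m))), q ^ inversions n τ)
            * qFactorial q (k+1)) := by
        rw [hsumdesc, hrev, hQn]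
    _ = q ^ ((k + 1).choose 2) / qFactorial q (k + 1) :=
        mul_div_mul_left _ _ (ne_of_gt hA_pos)
end

section
/- Under the Mallows measure p_q on S_n, the expected number of descents equals (q/(q+1))·(n-1). -/
/-- The number of descents of `ω`: the number of pairs of consecutive positions
`(i, i+1)` with `ω(i+1) < ω(i)`. -/
def descents (n : ℕ) (ω : Equiv.Perm (Fin n)) : ℕ :=
  ((Finset.univ : Finset (Fin n × Fin n)).filter
    (fun p => p.1.val + 1 = p.2.val ∧ ω p.2 < ω p.1)).card

open Finset Equiv

noncomputable def Zq (q : ℝ) (n : ℕ) : ℝ := ∑ ω : Equiv.Perm (Fin n), q ^ inversions n ω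

def Phi (n : ℕ) (p : Fin (n+1)) (e : Equiv.Perm (Fin n)) : Equiv.Perm (Fin (n+1)) :=
  ((finSuccEquiv' (0 : Fin (n+1))).trans (e.optionCongr)).trans (finSuccEquiv' p).symm

@[simp] lemma Phi_zero (n : ℕ) (p : Fin (n+1)) (e : Equiv.Perm (Fin n)) :
    Phi n p e 0 = p := by
  simp [Phi, finSuccEquiv'_at]

@[simp] lemma Phi_succ (n : ℕ) (p : Fin (n+1)) (e : Equiv.Perm (Fin n)) (j : Fin n) :
    Phi n p e j.succ = p.succAbove (e j) := by
  have h : (finSuccEquiv' (0:Fin (n+1))) j.succ = some j := by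
    rw [← Fin.zero_succAbove j, finSuccEquiv'_succAbove]
  simp [Phi, h, finSuccEquiv'_symm_some]

lemma sum_ite_lt (n : ℕ) (p : Fin (n+1)) :
    ∑ v : Fin n, (if (v : ℕ) < (p : ℕ) then 1 else 0) = (p : ℕ) := by
  rw [Fin.sum_univ_eq_sum_range (fun j => if j < (p:ℕ) then 1 else 0)]
  rw [← Finset.sum_filter]
  have : (Finset.range n).filter (fun j => j < (p:ℕ)) = Finset.range (p:ℕ) := by
    ext x
    simp only [mem_filter, mem_range]
    have := p.isLt
    omega
  simp [this]

lemma inversions_Phi (n : ℕ) (p : Fin (n+1)) (e : Equiv.Perm (Fin n)) :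
    inversions (n+1) (Phi n p e) = (p : ℕ) + inversions n e := by
  unfold inversions
  rw [Finset.card_filter, Finset.card_filter, Fintype.sum_prod_type, Fin.sum_univ_succ]
  have h0 : ∀ b : Fin (n+1), ((0 : Fin (n+1)) < b ∧ Phi n p e b < Phi n p e 0) ↔
      ((0 : Fin (n+1)) < b ∧ Phi n p e b < p) := by simp
  rw [Fin.sum_univ_succ (f := fun b => if (0 : Fin (n+1)) < b ∧ Phi n p e b < Phi n p e 0 then 1 else 0)]
  have hA : ∀ j : Fin n, ((0 : Fin (n+1)) < j.succ ∧ Phi n p e j.succ < Phi n p e 0) ↔ ((e j : ℕ) < (p : ℕ)) := by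
    intro j
    simp only [Phi_zero, Phi_succ, Fin.succ_pos, true_and,
      Fin.succAbove_lt_iff_castSucc_lt]
    simp only [Fin.lt_def, Fin.coe_castSucc]
  have hB : ∀ a b : Fin n, (a.succ < b.succ ∧ Phi n p e b.succ < Phi n p e a.succ) ↔ (a < b ∧ e b < e a) := by
    intro a b
    simp only [Phi_succ, Fin.succ_lt_succ_iff, Fin.succAbove_lt_succAbove_iff]
  have hC : ∀ a : Fin n, ¬ (a.succ < (0 : Fin (n+1))) := fun a => Fin.not_lt_zero _
  calc (if (0:Fin (n+1)) < 0 ∧ Phi n p e 0 < Phi n p e 0 then 1 else 0)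
        + (∑ j : Fin n, if (0:Fin (n+1)) < j.succ ∧ Phi n p e j.succ < Phi n p e 0 then 1 else 0)
        + ∑ a : Fin n, ∑ b : Fin (n+1), (if a.succ < b ∧ Phi n p e b < Phi n p e a.succ then 1 else 0)
      = (∑ j : Fin n, if ((e j : ℕ) < (p : ℕ)) then 1 else 0)
        + ∑ a : Fin n, ∑ b : Fin n, (if a < b ∧ e b < e a then 1 else 0) := by
        rw [if_neg (by simp)]
        rw [zero_add]
        congr 1
        · exact Finset.sum_congr rfl fun j _ => by rw [if_congr (hA j) rfl rfl]
        · refine Finset.sum_congr rfl fun a _ => ?_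
          rw [Fin.sum_univ_succ]
          rw [if_neg (by simp [hC a])]
          rw [zero_add]
          exact Finset.sum_congr rfl fun b _ => by rw [if_congr (hB a b) rfl rfl]
    _ = (p : ℕ) + ∑ i : Fin n × Fin n, (if i.1 < i.2 ∧ e i.2 < e i.1 then 1 else 0) := by
        congr 1
        · rw [Equiv.sum_comp e (fun v => if ((v:ℕ) < (p:ℕ)) then 1 else 0)]
          exact sum_ite_lt n p
        · exact (Fintype.sum_prod_type (fun i : Fin n × Fin n => if i.1 < i.2 ∧ e i.2 < e i.1 then (1:ℕ) else 0)).symm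

lemma Phi_bijective (n : ℕ) :
    Function.Bijective (fun pe : Fin (n+1) × Equiv.Perm (Fin n) => Phi n pe.1 pe.2) := by
  rw [Fintype.bijective_iff_injective_and_card]
  constructor
  · rintro ⟨p, e⟩ ⟨p', e'⟩ h
    simp only at h
    have hp : p = p' := by
      have := DFunLike.congr_fun h (0 : Fin (n+1))
      simpa using this
    subst hp
    have he : e = e' := by
      ext j
      have := DFunLike.congr_fun h (Fin.succ j)
      simp only [Phi_succ] at this
      exact congrArg Fin.val (Fin.succAbove_right_injective this)
    simp [he]
  · simp [Fintype.card_perm, Nat.factorial_succ, Nat.mul_comm]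

lemma Zq_succ (q : ℝ) (n : ℕ) :
    Zq q (n+1) = (∑ j ∈ Finset.range (n+1), q ^ j) * Zq q n := by
  rw [Zq, ← Fintype.sum_bijective _ (Phi_bijective n)
      (fun pe => q ^ inversions (n+1) (Phi n pe.1 pe.2)) _ (fun pe => rfl)]
  rw [Fintype.sum_prod_type (f := fun pe : Fin (n+1) × Equiv.Perm (Fin n) => q ^ inversions (n+1) (Phi n pe.1 pe.2))]
  rw [Finset.sum_mul]
  rw [← Fin.sum_univ_eq_sum_range (fun j => q ^ j * Zq q n) (n+1)]
  refine Finset.sum_congr rfl fun p _ => ?_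
  rw [Zq, Finset.mul_sum]
  refine Finset.sum_congr rfl fun e _ => ?_
  rw [inversions_Phi, pow_add]

lemma Zq_eq (q : ℝ) (n : ℕ) : Zq q n = qFactorial q n := by
  induction n with
  | zero =>
    rw [Zq, qFactorial]
    simp [inversions]
  | succ m ih =>
    rw [Zq_succ, ih, qFactorial, qFactorial, Finset.prod_range_succ, mul_comm]

lemma swap_lt_swap {n : ℕ} {a b : Fin n} (hab : (a:ℕ)+1 = (b:ℕ)) {c d : Fin n}
    (h : c < d) (hne : ¬(c = a ∧ d = b)) : Equiv.swap a b c < Equiv.swap a b d := by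
  rcases a with ⟨a, ha⟩; rcases b with ⟨b, hb⟩; rcases c with ⟨c, hc⟩; rcases d with ⟨d, hd⟩
  simp only [Equiv.swap_apply_def]
  split_ifs <;> simp_all [Fin.lt_def, Fin.ext_iff] <;> omega

lemma inv_filter (n : ℕ) (ω : Equiv.Perm (Fin n)) (a b : Fin n) :
    inversions n (ω * Equiv.swap a b) =
      ((Finset.univ : Finset (Fin n × Fin n)).filter
        (fun p => Equiv.swap a b p.1 < Equiv.swap a b p.2 ∧ ω p.2 < ω p.1)).card := by
  unfold inversions
  rw [Finset.card_filter, Finset.card_filter]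
  rw [← Equiv.sum_comp (Equiv.prodCongr (Equiv.swap a b) (Equiv.swap a b))
      (fun p : Fin n × Fin n =>
        if Equiv.swap a b p.1 < Equiv.swap a b p.2 ∧ ω p.2 < ω p.1 then (1:ℕ) else 0)]
  refine Finset.sum_congr rfl fun p _ => ?_
  simp [Equiv.Perm.mul_apply, Equiv.swap_apply_self]
  congr

lemma inversions_mul_swap_of_desc {n : ℕ} {a b : Fin n} (hab : (a:ℕ)+1 = (b:ℕ))
    (ω : Equiv.Perm (Fin n)) (h : ω b < ω a) :
    inversions n ω = inversions n (ω * Equiv.swap a b) + 1 := by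
  rw [inv_filter n ω a b]
  have key : (Finset.univ.filter (fun p : Fin n × Fin n => p.1 < p.2 ∧ ω p.2 < ω p.1))
      = insert (a, b) (Finset.univ.filter
          (fun p : Fin n × Fin n => Equiv.swap a b p.1 < Equiv.swap a b p.2 ∧ ω p.2 < ω p.1)) := by
    ext ⟨c, d⟩
    simp only [Finset.mem_filter, Finset.mem_univ, true_and, Finset.mem_insert, Prod.mk.injEq]
    constructor
    · rintro ⟨hcd, hw⟩
      by_cases hed : c = a ∧ d = b
      · exact Or.inl hed
      · exact Or.inr ⟨swap_lt_swap hab hcd hed, hw⟩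
    · rintro (⟨rfl, rfl⟩ | ⟨hs, hw⟩)
      · exact ⟨Fin.lt_def.mpr (by omega), h⟩
      · refine ⟨?_, hw⟩
        have hne : ¬(Equiv.swap a b c = a ∧ Equiv.swap a b d = b) := by
          rintro ⟨h1, h2⟩
          have hc : c = b := by
            have := congrArg (Equiv.swap a b) h1
            simpa [Equiv.swap_apply_self, Equiv.swap_apply_left] using this
          have hd : d = a := by
            have := congrArg (Equiv.swap a b) h2
            simpa [Equiv.swap_apply_self, Equiv.swap_apply_right] using this
          subst hc; subst hd
          exact absurd hw (lt_asymm h)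
        have := swap_lt_swap hab hs hne
        simpa [Equiv.swap_apply_self] using this
  rw [inversions, key, Finset.card_insert_of_notMem]
  simp only [Finset.mem_filter, Finset.mem_univ, true_and, not_and,
    Equiv.swap_apply_left, Equiv.swap_apply_right]
  intro hba
  exact absurd hba (by rw [Fin.lt_def]; omega)

lemma inversions_mul_swap_of_asc {n : ℕ} {a b : Fin n} (hab : (a:ℕ)+1 = (b:ℕ))
    (ω : Equiv.Perm (Fin n)) (h : ω a < ω b) :
    inversions n (ω * Equiv.swap a b) = inversions n ω + 1 := by
  rw [inv_filter n ω a b]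
  have key : (Finset.univ.filter
        (fun p : Fin n × Fin n => Equiv.swap a b p.1 < Equiv.swap a b p.2 ∧ ω p.2 < ω p.1))
      = insert (b, a) (Finset.univ.filter
          (fun p : Fin n × Fin n => p.1 < p.2 ∧ ω p.2 < ω p.1)) := by
    ext ⟨c, d⟩
    simp only [Finset.mem_filter, Finset.mem_univ, true_and, Finset.mem_insert, Prod.mk.injEq]
    constructor
    · rintro ⟨hs, hw⟩
      by_cases hed : c = b ∧ d = a
      · exact Or.inl hed
      · refine Or.inr ⟨?_, hw⟩
        have hne : ¬(Equiv.swap a b c = a ∧ Equiv.swap a b d = b) := by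
          rintro ⟨h1, h2⟩
          have hc : c = b := by
            have := congrArg (Equiv.swap a b) h1
            simpa [Equiv.swap_apply_self, Equiv.swap_apply_left] using this
          have hd : d = a := by
            have := congrArg (Equiv.swap a b) h2
            simpa [Equiv.swap_apply_self, Equiv.swap_apply_right] using this
          exact hed ⟨hc, hd⟩
        have := swap_lt_swap hab hs hne
        simpa [Equiv.swap_apply_self] using this
    · rintro (⟨rfl, rfl⟩ | ⟨hcd, hw⟩)
      · refine ⟨?_, h⟩
        rw [Equiv.swap_apply_left, Equiv.swap_apply_right, Fin.lt_def]
        omega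
      · refine ⟨?_, hw⟩
        refine swap_lt_swap hab hcd ?_
        rintro ⟨rfl, rfl⟩
        exact absurd hw (lt_asymm h)
  rw [inversions, key, Finset.card_insert_of_notMem]
  simp only [Finset.mem_filter, Finset.mem_univ, true_and, not_and]
  intro hba
  exact absurd hba (by rw [Fin.lt_def]; omega)

lemma sum_desc (q : ℝ) (hq : 0 < q) (n : ℕ) {a b : Fin n} (hab : (a:ℕ)+1 = (b:ℕ)) :
    ∑ ω : Equiv.Perm (Fin n), q ^ inversions n ω * (if ω b < ω a then (1:ℝ) else 0)
      = q / (q + 1) * Zq q n := by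
  have hne : a ≠ b := by
    intro h; rw [h] at hab; omega
  set S := ∑ ω : Equiv.Perm (Fin n), q ^ inversions n ω * (if ω b < ω a then (1:ℝ) else 0)
    with hS
  set T := ∑ ω : Equiv.Perm (Fin n), q ^ inversions n ω * (if ω a < ω b then (1:ℝ) else 0)
    with hT
  have hsplit : S + T = Zq q n := by
    rw [hS, hT, ← Finset.sum_add_distrib, Zq]
    refine Finset.sum_congr rfl fun ω _ => ?_
    have hne2 : ω a ≠ ω b := fun hh => hne (ω.injective hh)
    by_cases h : ω b < ω a
    · rw [if_pos h, if_neg (lt_asymm h)]; ring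
    · rw [if_neg h, if_pos (lt_of_le_of_ne (not_lt.mp h) hne2)]; ring
  have hST : S = q * T := by
    rw [hS, ← Equiv.sum_comp (Equiv.mulRight (Equiv.swap a b))
        (fun ω : Equiv.Perm (Fin n) => q ^ inversions n ω * (if ω b < ω a then (1:ℝ) else 0))]
    rw [hT, Finset.mul_sum]
    refine Finset.sum_congr rfl fun ω _ => ?_
    have hb : (ω * Equiv.swap a b) b = ω a := by
      simp [Equiv.Perm.mul_apply, Equiv.swap_apply_right]
    have ha : (ω * Equiv.swap a b) a = ω b := by
      simp [Equiv.Perm.mul_apply, Equiv.swap_apply_left]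
    simp only [Equiv.coe_mulRight, hb, ha]
    by_cases h : ω a < ω b
    · rw [if_pos h, inversions_mul_swap_of_asc hab ω h, pow_succ]
      ring
    · rw [if_neg h]; ring
  have hq1 : q + 1 ≠ 0 := by positivity
  have : S = q * (Zq q n - S) := by rw [← hsplit]; rw [hST]; ring
  field_simp at this ⊢
  linarith

lemma card_adj (n : ℕ) :
    ((Finset.univ : Finset (Fin n × Fin n)).filter
      (fun p => p.1.val + 1 = p.2.val)).card = n - 1 := by
  rw [← Finset.card_range (n-1)]
  apply Finset.card_bij (fun p _ => p.1.val)
  · rintro ⟨c, d⟩ hp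
    simp only [Finset.mem_filter, Finset.mem_univ, true_and] at hp
    simp only [Finset.mem_range]
    have := d.isLt
    omega
  · rintro ⟨c, d⟩ hp ⟨c', d'⟩ hp' hcc
    simp only [Finset.mem_filter, Finset.mem_univ, true_and] at hp hp'
    simp only at hcc
    have h1 : c = c' := Fin.ext hcc
    have h2 : d = d' := Fin.ext (by omega)
    rw [h1, h2]
  · intro k hk
    simp only [Finset.mem_range] at hk
    refine ⟨(⟨k, by omega⟩, ⟨k+1, by omega⟩), ?_, rfl⟩
    simp

/-- Under the Mallows measure `p_q` on `S_n`, the expected number of descents is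
`(q/(q+1)) (n-1)`. -/
theorem mallows_expected_descents (q : ℝ) (hq : 0 < q) (n : ℕ) (hn : 1 ≤ n) :
    ∑ ω : Equiv.Perm (Fin n), mallows q n ω * (descents n ω : ℝ) =
      q / (q + 1) * ((n : ℝ) - 1) := by
  have hF : 0 < qFactorial q n := by
    unfold qFactorial
    refine Finset.prod_pos fun i _ => Finset.sum_pos (fun j _ => pow_pos hq j) ?_
    exact Finset.nonempty_range_iff.mpr (Nat.succ_ne_zero i)
  have hdesc : ∀ ω : Equiv.Perm (Fin n), (descents n ω : ℝ) =
      ∑ p : Fin n × Fin n, (if p.1.val + 1 = p.2.val ∧ ω p.2 < ω p.1 then (1:ℝ) else 0) := by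
    intro ω
    rw [descents, Finset.card_filter]
    push_cast
    rfl
  have step1 : ∑ ω : Equiv.Perm (Fin n), mallows q n ω * (descents n ω : ℝ)
      = ∑ ω : Equiv.Perm (Fin n), ∑ p : Fin n × Fin n,
          mallows q n ω * (if p.1.val + 1 = p.2.val ∧ ω p.2 < ω p.1 then (1:ℝ) else 0) :=
    Finset.sum_congr rfl fun ω _ => by rw [hdesc ω, Finset.mul_sum]
  rw [step1, Finset.sum_comm]
  have step2 : ∀ p : Fin n × Fin n,
      (∑ ω : Equiv.Perm (Fin n), mallows q n ω *
        (if p.1.val + 1 = p.2.val ∧ ω p.2 < ω p.1 then (1:ℝ) else 0))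
      = if p.1.val + 1 = p.2.val then q / (q+1) else 0 := by
    intro p
    by_cases hp : p.1.val + 1 = p.2.val
    · rw [if_pos hp]
      have key := sum_desc q hq n hp
      calc ∑ ω : Equiv.Perm (Fin n), mallows q n ω *
            (if p.1.val + 1 = p.2.val ∧ ω p.2 < ω p.1 then (1:ℝ) else 0)
          = (∑ ω : Equiv.Perm (Fin n), q ^ inversions n ω *
              (if ω p.2 < ω p.1 then (1:ℝ) else 0)) / qFactorial q n := by
            rw [Finset.sum_div]
            refine Finset.sum_congr rfl fun ω _ => ?_
            rw [mallows]
            by_cases h : ω p.2 < ω p.1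
            · rw [if_pos ⟨hp, h⟩, if_pos h]; ring
            · rw [if_neg (fun hh => h hh.2), if_neg h]; ring
        _ = q / (q+1) := by
            rw [key, Zq_eq]
            field_simp
    · rw [if_neg hp]
      refine Finset.sum_eq_zero fun ω _ => ?_
      rw [if_neg (fun hh => hp hh.1), mul_zero]
  calc ∑ p : Fin n × Fin n, ∑ ω : Equiv.Perm (Fin n), mallows q n ω *
        (if p.1.val + 1 = p.2.val ∧ ω p.2 < ω p.1 then (1:ℝ) else 0)
      = ∑ p : Fin n × Fin n, (if p.1.val + 1 = p.2.val then q / (q+1) else 0) :=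
        Finset.sum_congr rfl fun p _ => step2 p
    _ = ((n - 1 : ℕ) : ℝ) * (q / (q+1)) := by
        rw [← Finset.sum_filter, Finset.sum_const, card_adj, nsmul_eq_mul]
    _ = q / (q + 1) * ((n : ℝ) - 1) := by
        rw [Nat.cast_sub hn, Nat.cast_one]
        ring
end

section
/- Let T and T′ be I×J contingency tables with the same row and column sums, and suppose the vector of entries of T is majorized by that of T′ (and they are not rearrangements of each other). Then the Fisher-Yates probabilities satisfy P(T) > P(T′), where P(T) = (∏_i λ_i!)(∏_j μ_j!)/(n! ∏_{i,j} T_{ij}!). In particular, T ↦ −∑_{i,j} log(T_{ij}!) is a Schur-concave function of the entries. -/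
/-- The multiset of entries of an `I × J` table. -/
def tableEntries (I J : ℕ) (T : Fin I → Fin J → ℕ) : Multiset ℕ :=
  (Finset.univ : Finset (Fin I × Fin J)).val.map (fun p => T p.1 p.2)

/-- The Fisher-Yates probability of a table with row sums `lam`, column sums `mu`
and total `n`. -/
def fisherYates (I J n : ℕ) (lam : Fin I → ℕ) (mu : Fin J → ℕ)
    (T : Fin I → Fin J → ℕ) : ℚ :=
  ((∏ i, ((lam i).factorial : ℚ)) * ∏ j, ((mu j).factorial : ℚ)) /
    ((n.factorial : ℚ) * ∏ i, ∏ j, ((T i j).factorial : ℚ))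

open Finset

private lemma fact_transfer {x y : ℕ} (h : y + 2 ≤ x) :
    (y+1).factorial * (x-1).factorial < y.factorial * x.factorial := by
  obtain ⟨z, rfl⟩ : ∃ z, x = z + 1 := ⟨x-1, by omega⟩
  simp only [Nat.factorial_succ, Nat.add_sub_cancel]
  have hpos : 0 < y.factorial * z.factorial :=
    Nat.mul_pos (Nat.factorial_pos y) (Nat.factorial_pos z)
  calc (y+1) * y.factorial * z.factorial = (y+1) * (y.factorial * z.factorial) := by ring
    _ < (z+1) * (y.factorial * z.factorial) :=
        Nat.mul_lt_mul_of_lt_of_le (by omega) (le_refl _) hpos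
    _ = y.factorial * ((z+1) * z.factorial) := by ring

private lemma core_schur :
    ∀ m L (a b : ℕ → ℕ),
      (∀ i j, i ≤ j → j < L → a j ≤ a i) →
      (∀ i j, i ≤ j → j < L → b j ≤ b i) →
      (∀ K, K ≤ L → ∑ k ∈ range K, b k ≤ ∑ k ∈ range K, a k) →
      (∑ k ∈ range L, a k = ∑ k ∈ range L, b k) →
      (∑ K ∈ range L, ((∑ k ∈ range (K+1), a k) - ∑ k ∈ range (K+1), b k) = m) →
      (∃ k, k < L ∧ a k ≠ b k) →
      ∏ k ∈ range L, (b k).factorial < ∏ k ∈ range L, (a k).factorial := by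
  intro m
  induction m using Nat.strong_induction_on with
  | _ m IH =>
  intro L a b ha hb hmaj hsum hm hne
  classical
  -- i : minimal index where a and b differ
  set i := Nat.find hne with hidef
  have hiL : i < L := (Nat.find_spec hne).1
  have hiab : a i ≠ b i := (Nat.find_spec hne).2
  have hilt : ∀ k, k < i → a k = b k := by
    intro k hk
    by_contra hcon
    exact Nat.find_min hne hk ⟨by omega, hcon⟩
  clear_value i
  have hbi : b i < a i := by
    have h1 := hmaj (i+1) (by omega)
    have h2 : ∑ k ∈ range i, a k = ∑ k ∈ range i, b k :=
      sum_congr rfl (fun k hk => hilt k (mem_range.mp hk))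
    rw [sum_range_succ, sum_range_succ] at h1
    omega
  -- j : minimal index where a < b
  have hex_j : ∃ k, k < L ∧ a k < b k := by
    by_contra hcon
    push_neg at hcon
    have : ∑ k ∈ range L, b k < ∑ k ∈ range L, a k :=
      Finset.sum_lt_sum (fun k hk => hcon k (mem_range.mp hk))
        ⟨i, mem_range.mpr hiL, hbi⟩
    omega
  set j := Nat.find hex_j with hjdef
  have hjL : j < L := (Nat.find_spec hex_j).1
  have hjab : a j < b j := (Nat.find_spec hex_j).2
  have hkj : ∀ k, k < j → b k ≤ a k := by
    intro k hk
    by_contra h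
    push_neg at h
    exact Nat.find_min hex_j hk ⟨by omega, h⟩
  clear_value j
  have hij : i < j := by
    rcases lt_trichotomy i j with h | h | h
    · exact h
    · subst h; omega
    · have := hilt j h; omega
  have hbij : b j ≤ b i := hb i j hij.le hjL
  have hxy : a j + 2 ≤ a i := by omega
  -- i' : largest index ≤ j-1 with a i' = a i
  set i' := Nat.findGreatest (fun k => a k = a i) (j-1) with hi'def
  have hi'le : i ≤ i' := Nat.le_findGreatest (P := fun k => a k = a i) (by omega) rfl
  have hi'j : i' ≤ j - 1 := Nat.findGreatest_le _
  have hai' : a i' = a i :=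
    Nat.findGreatest_spec (P := fun k => a k = a i) (m := i) (by omega) rfl
  have hstep1 : ∀ k, i' < k → k < L → a k < a i := by
    intro k hk hkL
    rcases le_or_gt k (j-1) with h | h
    · have hne2 : ¬ (a k = a i) :=
        Nat.findGreatest_is_greatest (P := fun k => a k = a i) hk h
      have : a k ≤ a i' := ha i' k hk.le hkL
      omega
    · have : a k ≤ a j := ha j k (by omega) hkL
      omega
  clear_value i'
  -- j' : minimal index with a j' = a j
  have hex_j' : ∃ k, a k = a j := ⟨j, rfl⟩
  set j' := Nat.find hex_j' with hj'def
  have hj'spec : a j' = a j := Nat.find_spec hex_j'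
  have hj'le : j' ≤ j := Nat.find_min' hex_j' rfl
  have hstep2' : ∀ k, k < j' → ¬ (a k = a j) := fun k hk => Nat.find_min hex_j' hk
  clear_value j'
  have hi'j' : i' < j' := by
    by_contra h
    push_neg at h
    have : a i' ≤ a j' := ha j' i' h (by omega)
    omega
  have hstep2 : ∀ k, k < j' → a j < a k := by
    intro k hk
    have h1 := hstep2' k hk
    have h2 : a j' ≤ a k := ha k j' hk.le (by omega)
    omega
  have hane : i' ≠ j' := by omega
  -- the transfer
  set u := Function.update (Function.update a i' (a i' - 1)) j' (a j' + 1) with hu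
  have hu1 : u i' = a i - 1 := by
    rw [hu, Function.update_of_ne hane, Function.update_self, hai']
  have hu2 : u j' = a j + 1 := by
    rw [hu, Function.update_self, hj'spec]
  have hu3 : ∀ k, k ≠ i' → k ≠ j' → u k = a k := by
    intro k h1 h2
    rw [hu, Function.update_of_ne h2, Function.update_of_ne h1]
  clear_value u
  -- u is antitone on [0, L)
  have hu_anti : ∀ p q, p ≤ q → q < L → u q ≤ u p := by
    intro p q hpq hqL
    rcases eq_or_lt_of_le hpq with rfl | hpq'
    · exact le_refl _
    by_cases hq1 : q = i'
    · have hp1 : p ≠ i' := by omega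
      have hp2 : p ≠ j' := by omega
      rw [hq1, hu1, hu3 p hp1 hp2]
      have : a i' ≤ a p := ha p i' (by omega) (by omega)
      omega
    by_cases hq2 : q = j'
    · rw [hq2, hu2]
      by_cases hp1 : p = i'
      · rw [hp1, hu1]; omega
      · have hp2 : p ≠ j' := by omega
        rw [hu3 p hp1 hp2]
        have := hstep2 p (by omega)
        omega
    · rw [hu3 q hq1 hq2]
      by_cases hp1 : p = i'
      · rw [hp1, hu1]
        have := hstep1 q (by omega) hqL
        omega
      by_cases hp2 : p = j'
      · rw [hp2, hu2]
        have : a q ≤ a j' := ha j' q (by omega) hqL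
        omega
      · rw [hu3 p hp1 hp2]
        exact ha p q hpq hqL
  -- partial sums of u
  have hSeq : ∀ K, K ≤ i' ∨ j' < K → ∑ k ∈ range K, u k = ∑ k ∈ range K, a k := by
    intro K hK
    rcases hK with hK | hK
    · exact sum_congr rfl fun k hk => by
        have := mem_range.mp hk
        exact hu3 k (by omega) (by omega)
    · have h2 : j' ∈ range K := mem_range.mpr (by omega)
      have h1 : i' ∈ (range K).erase j' := mem_erase.mpr ⟨hane, mem_range.mpr (by omega)⟩
      rw [← Finset.add_sum_erase _ u h2, ← Finset.add_sum_erase _ u h1,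
        ← Finset.add_sum_erase _ a h2, ← Finset.add_sum_erase _ a h1]
      have hrest : ∑ k ∈ ((range K).erase j').erase i', u k
          = ∑ k ∈ ((range K).erase j').erase i', a k := by
        refine Finset.sum_congr rfl fun k hk => ?_
        exact hu3 k (mem_erase.mp hk).1 (mem_erase.mp (mem_erase.mp hk).2).1
      rw [hrest, hu1, hu2]
      omega
  have hSmid : ∀ K, i' < K → K ≤ j' → (∑ k ∈ range K, u k) + 1 = ∑ k ∈ range K, a k := by
    intro K h1 h2
    have hi'm : i' ∈ range K := mem_range.mpr h1
    rw [← Finset.add_sum_erase _ u hi'm, ← Finset.add_sum_erase _ a hi'm]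
    have hrest : ∑ k ∈ (range K).erase i', u k = ∑ k ∈ (range K).erase i', a k := by
      refine Finset.sum_congr rfl fun k hk => ?_
      have := mem_range.mp (mem_erase.mp hk).2
      exact hu3 k (mem_erase.mp hk).1 (by omega)
    rw [hrest, hu1]
    omega
  -- strict majorization in the middle range
  have hstrict : ∀ K, i' < K → K ≤ j' → (∑ k ∈ range K, b k) + 1 ≤ ∑ k ∈ range K, a k := by
    intro K h1 h2
    have : ∑ k ∈ range K, b k < ∑ k ∈ range K, a k :=
      Finset.sum_lt_sum (fun k hk => hkj k (by have := mem_range.mp hk; omega))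
        ⟨i, mem_range.mpr (by omega), hbi⟩
    omega
  -- b is majorized by u
  have hmaj' : ∀ K, K ≤ L → ∑ k ∈ range K, b k ≤ ∑ k ∈ range K, u k := by
    intro K hK
    rcases le_or_gt K i' with h | h
    · rw [hSeq K (Or.inl h)]; exact hmaj K hK
    rcases le_or_gt j' K with h2 | h2
    · rcases eq_or_lt_of_le h2 with heq | h3
      · have := hSmid K h (by omega)
        have := hstrict K h (by omega)
        omega
      · rw [hSeq K (Or.inr h3)]; exact hmaj K hK
    · have := hSmid K h h2.le
      have := hstrict K h h2.le
      omega
  have hsum' : ∑ k ∈ range L, u k = ∑ k ∈ range L, b k := by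
    rw [hSeq L (Or.inr (by omega))]; exact hsum
  -- product strictly decreases
  have hprod : ∏ k ∈ range L, (u k).factorial < ∏ k ∈ range L, (a k).factorial := by
    have h2 : j' ∈ range L := mem_range.mpr (by omega)
    have h1 : i' ∈ (range L).erase j' := mem_erase.mpr ⟨hane, mem_range.mpr (by omega)⟩
    rw [← Finset.mul_prod_erase _ (fun k => (u k).factorial) h2,
      ← Finset.mul_prod_erase _ (fun k => (u k).factorial) h1,
      ← Finset.mul_prod_erase _ (fun k => (a k).factorial) h2,
      ← Finset.mul_prod_erase _ (fun k => (a k).factorial) h1]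
    have hrest : ∏ k ∈ ((range L).erase j').erase i', (u k).factorial
        = ∏ k ∈ ((range L).erase j').erase i', (a k).factorial := by
      refine Finset.prod_congr rfl fun k hk => ?_
      rw [hu3 k (mem_erase.mp hk).1 (mem_erase.mp (mem_erase.mp hk).2).1]
    rw [hrest, hu1, hu2, hai', hj'spec, ← mul_assoc, ← mul_assoc]
    have hR : 0 < ∏ k ∈ ((range L).erase j').erase i', (a k).factorial :=
      Finset.prod_pos (fun _ _ => Nat.factorial_pos _)
    exact Nat.mul_lt_mul_of_lt_of_le (fact_transfer hxy) (le_refl _) hR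
  -- the measure strictly decreases
  have hSle : ∀ K, ∑ k ∈ range K, u k ≤ ∑ k ∈ range K, a k := by
    intro K
    rcases le_or_gt K i' with h | h
    · exact (hSeq K (Or.inl h)).le
    rcases le_or_gt K j' with h2 | h2
    · have := hSmid K h h2; omega
    · exact (hSeq K (Or.inr h2)).le
  set m' := ∑ K ∈ range L, ((∑ k ∈ range (K+1), u k) - ∑ k ∈ range (K+1), b k) with hm'
  have hm'lt : m' < m := by
    rw [hm', ← hm]
    apply Finset.sum_lt_sum
    · intro K hK
      have := hSle (K+1)
      omega
    · refine ⟨i', mem_range.mpr (by omega), ?_⟩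
      have h1 := hSmid (i'+1) (by omega) (by omega)
      have h2 := hstrict (i'+1) (by omega) (by omega)
      omega
  -- conclude
  by_cases hfin : ∃ k, k < L ∧ u k ≠ b k
  · have hIH := IH m' hm'lt L u b hu_anti hb hmaj' hsum' rfl hfin
    exact lt_trans hIH hprod
  · push_neg at hfin
    have heq : ∏ k ∈ range L, (b k).factorial = ∏ k ∈ range L, (u k).factorial :=
      Finset.prod_congr rfl fun k hk => by rw [hfin k (mem_range.mp hk)]
    rw [heq]
    exact hprod

private lemma list_prod_eq (l : List ℕ) (f : ℕ → ℕ) :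
    ∏ k ∈ Finset.range l.length, f (l.getD k 0) = (l.map f).prod := by
  induction l with
  | nil => simp
  | cons x xs ih =>
    rw [List.length_cons, Finset.prod_range_succ']
    simp only [List.getD_cons_succ, List.getD_cons_zero, List.map_cons, List.prod_cons, ih]
    exact mul_comm _ _

private lemma take_sum (l : List ℕ) : ∀ K, K ≤ l.length →
    ∑ k ∈ Finset.range K, l.getD k 0 = (l.take K).sum := by
  induction l with
  | nil => intro K hK; simp at hK; subst hK; simp
  | cons x xs ih =>
    intro K hK
    cases K with
    | zero => simp
    | succ K =>
      rw [Finset.sum_range_succ', List.take_succ_cons]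
      simp only [List.getD_cons_succ, List.getD_cons_zero, List.sum_cons,
        ih K (by simpa using hK)]
      exact add_comm _ _

private lemma rev_sorted_anti (l : List ℕ) (hl : l.Pairwise (· ≤ ·)) :
    ∀ i j, i ≤ j → j < l.reverse.length → l.reverse.getD j 0 ≤ l.reverse.getD i 0 := by
  intro i j hij hj
  have hi : i < l.reverse.length := lt_of_le_of_lt (by omega) hj
  have hr : l.reverse.Pairwise (fun a b => b ≤ a) :=
    List.pairwise_reverse.mpr hl
  rcases eq_or_lt_of_le hij with rfl | hlt
  · exact le_refl _
  · rw [List.getD_eq_getElem _ _ hj, List.getD_eq_getElem _ _ hi]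
    exact List.pairwise_iff_get.mp hr ⟨i, hi⟩ ⟨j, hj⟩ hlt

private lemma entries_sum (I J : ℕ) (T : Fin I → Fin J → ℕ) :
    (tableEntries I J T).sum = ∑ i, ∑ j, T i j := by
  rw [show (tableEntries I J T).sum = ∑ p : Fin I × Fin J, T p.1 p.2 from rfl]
  exact Fintype.sum_prod_type _

private lemma entries_prod (I J : ℕ) (T : Fin I → Fin J → ℕ) :
    ((tableEntries I J T).map Nat.factorial).prod = ∏ i, ∏ j, (T i j).factorial := by
  rw [tableEntries, Multiset.map_map]
  rw [show ((Finset.univ : Finset (Fin I × Fin J)).val.map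
      (Nat.factorial ∘ fun p => T p.1 p.2)).prod
      = ∏ p : Fin I × Fin J, (T p.1 p.2).factorial from rfl]
  exact Fintype.prod_prod_type _

/-- If the entries of `T` are majorized by those of `T'` (same margins, and the
entries are not rearrangements of each other), then `P(T) > P(T')` for the
Fisher-Yates distribution: the Fisher-Yates probability is Schur-concave in the
table entries. Majorization is expressed via the sorted-decreasing partial sums. -/
theorem fisherYates_schur_concave (I J n : ℕ) (lam : Fin I → ℕ) (mu : Fin J → ℕ)
    (T T' : Fin I → Fin J → ℕ)
    (hTr : ∀ i, ∑ j, T i j = lam i) (hTc : ∀ j, ∑ i, T i j = mu j)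
    (hT'r : ∀ i, ∑ j, T' i j = lam i) (hT'c : ∀ j, ∑ i, T' i j = mu j)
    (htot : ∑ i, lam i = n)
    (hmaj : ∀ k : ℕ,
      ((((tableEntries I J T).sort (· ≤ ·)).reverse.take k).sum ≤
        (((tableEntries I J T').sort (· ≤ ·)).reverse.take k).sum))
    (hne : tableEntries I J T ≠ tableEntries I J T') :
    fisherYates I J n lam mu T' < fisherYates I J n lam mu T := by
  classical
  set la := ((tableEntries I J T').sort (· ≤ ·)).reverse with hla
  set lb := ((tableEntries I J T).sort (· ≤ ·)).reverse with hlb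
  set L := la.length with hL
  have hlen : lb.length = L := by
    rw [hL, hla, hlb, List.length_reverse, List.length_reverse,
      Multiset.length_sort, Multiset.length_sort, tableEntries, tableEntries,
      Multiset.card_map, Multiset.card_map]
  have ha : ∀ i j, i ≤ j → j < L → la.getD j 0 ≤ la.getD i 0 :=
    fun i j hij hj => rev_sorted_anti _ (Multiset.pairwise_sort _ _) i j hij hj
  have hb : ∀ i j, i ≤ j → j < L → lb.getD j 0 ≤ lb.getD i 0 :=
    fun i j hij hj =>
      rev_sorted_anti _ (Multiset.pairwise_sort _ _) i j hij (lt_of_lt_of_le hj hlen.ge)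
  -- sums
  have h1 : ∑ k ∈ range L, la.getD k 0 = la.sum := by
    rw [hL, take_sum la _ (le_refl _), List.take_length]
  have h2 : ∑ k ∈ range L, lb.getD k 0 = lb.sum := by
    rw [← hlen, take_sum lb _ (le_refl _), List.take_length]
  have hsum_la : la.sum = (tableEntries I J T').sum := by
    rw [hla, List.sum_reverse, ← Multiset.sum_coe, Multiset.sort_eq]
  have hsum_lb : lb.sum = (tableEntries I J T).sum := by
    rw [hlb, List.sum_reverse, ← Multiset.sum_coe, Multiset.sort_eq]
  have hsum : ∑ k ∈ range L, la.getD k 0 = ∑ k ∈ range L, lb.getD k 0 := by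
    rw [h1, h2, hsum_la, hsum_lb, entries_sum, entries_sum]
    simp only [hTr, hT'r]
  -- majorization
  have hmaj' : ∀ K, K ≤ L → ∑ k ∈ range K, lb.getD k 0 ≤ ∑ k ∈ range K, la.getD k 0 := by
    intro K hK
    rw [take_sum la K hK, take_sum lb K (le_trans hK hlen.ge)]
    exact hmaj K
  -- distinctness
  have hne' : ∃ k, k < L ∧ la.getD k 0 ≠ lb.getD k 0 := by
    by_contra h
    push_neg at h
    have hl : la = lb := by
      apply List.ext_getElem hlen.symm
      intro k hk1 hk2
      have := h k (show k < L from hk1)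
      rwa [List.getD_eq_getElem _ _ hk1, List.getD_eq_getElem _ _ hk2] at this
    have heq : tableEntries I J T' = tableEntries I J T := by
      have h2 : (tableEntries I J T').sort (· ≤ ·) = (tableEntries I J T).sort (· ≤ ·) := by
        have := congrArg List.reverse hl
        simpa [hla, hlb] using this
      rw [← Multiset.sort_eq (tableEntries I J T') (· ≤ ·),
        ← Multiset.sort_eq (tableEntries I J T) (· ≤ ·), h2]
    exact hne heq.symm
  -- apply the core lemma
  have hkey : (∏ k ∈ range L, (lb.getD k 0).factorial)
      < ∏ k ∈ range L, (la.getD k 0).factorial :=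
    core_schur _ L (fun k => la.getD k 0) (fun k => lb.getD k 0) ha hb hmaj' hsum rfl hne'
  -- translate the products
  have hpb : ∏ k ∈ range L, (lb.getD k 0).factorial = ∏ i, ∏ j, (T i j).factorial := by
    rw [← hlen, list_prod_eq lb Nat.factorial, hlb, List.map_reverse, List.prod_reverse,
      ← Multiset.prod_coe, ← Multiset.map_coe, Multiset.sort_eq, entries_prod]
  have hpa : ∏ k ∈ range L, (la.getD k 0).factorial = ∏ i, ∏ j, (T' i j).factorial := by
    rw [hL, list_prod_eq la Nat.factorial, hla, List.map_reverse, List.prod_reverse,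
      ← Multiset.prod_coe, ← Multiset.map_coe, Multiset.sort_eq, entries_prod]
  rw [hpb, hpa] at hkey
  -- conclude in ℚ
  rw [fisherYates, fisherYates]
  have hN : 0 < (∏ i, ((lam i).factorial : ℚ)) * ∏ j, ((mu j).factorial : ℚ) := by
    apply mul_pos <;> exact Finset.prod_pos (fun _ _ => by positivity)
  have hcast : ∀ S : Fin I → Fin J → ℕ, (∏ i, ∏ j, ((S i j).factorial : ℚ))
      = ((∏ i, ∏ j, (S i j).factorial : ℕ) : ℚ) := by
    intro S; push_cast; rfl
  rw [hcast T, hcast T']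
  have hfq : (0:ℚ) < (n.factorial : ℚ) := by exact_mod_cast n.factorial_pos
  have hPq : (0:ℚ) < ((∏ i, ∏ j, (T i j).factorial : ℕ) : ℚ) := by
    exact_mod_cast Finset.prod_pos fun i _ => Finset.prod_pos fun j _ => Nat.factorial_pos _
  have hD : (0:ℚ) < (n.factorial : ℚ) * ((∏ i, ∏ j, (T i j).factorial : ℕ) : ℚ) :=
    mul_pos hfq hPq
  have hDlt : (n.factorial : ℚ) * ((∏ i, ∏ j, (T i j).factorial : ℕ) : ℚ)
      < (n.factorial : ℚ) * ((∏ i, ∏ j, (T' i j).factorial : ℕ) : ℚ) := by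
    apply mul_lt_mul_of_pos_left _ hfq
    exact_mod_cast hkey
  exact div_lt_div_of_pos_left hN hD hDlt
end
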